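/- (Combinatorial expansion of the off-diagonal part of b(k,p)²) Let n ≥ 2, p = (p_1,…,p_n) ∈ ℝ^n, and 1 ≤ k ≤ n−1. Then ∑_{C ≠ D ⊆ [n], |C| = |D| = k} ∏_{c∈C} p_c · ∏_{d∈D} p_d · ∏_{c'∈C^c} (1−p_{c'}) · ∏_{d'∈D^c} (1−p_{d'}) = ∑_{w=0}^{k−1} ∑_{I ⊆ [n], |I| = w} ∑_{J ⊆ [n]∖I, |J| = 2k−2w} C(2k−2w, k−w) · ∏_{i∈I} p_i² · ∏_{i'∈J} p_{i'}·(1−p_{i'}) · ∏_{j ∈ (I∪J)^c} (1−p_j)². Consequently, b(k,p)² = ∑_{C ⊆ [n], |C| = k} ∏_{i∈C} p_i² ∏_{j∈C^c} (1−p_j)² + the above sum. -/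

import Mathlib

open Finset

/-- `b(k,p)`: the Poisson–binomial probability mass function, defined for all
integers `k` (it vanishes for `k < 0` or `k > n`). -/
noncomputable def pbin (n : ℕ) (p : Fin n → ℝ) (k : ℤ) : ℝ :=
  ∑ A ∈ Finset.univ.powerset.filter (fun A : Finset (Fin n) => (A.card : ℤ) = k),
    (∏ i ∈ A, p i) * ∏ j ∈ Aᶜ, (1 - p j)

section helpers

variable {α β γ M : Type*} [Fintype α] [Fintype β] [Fintype γ] [AddCommMonoid M]

lemma sum_filter_pair (P : α → Prop) (Q : α → β → Prop) [DecidablePred P]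
    [∀ a, DecidablePred (Q a)] (f : α → β → M) :
    ∑ a ∈ univ.filter P, ∑ b ∈ univ.filter (Q a), f a b
      = ∑ q ∈ univ.filter (fun q : α × β => P q.1 ∧ Q q.1 q.2), f q.1 q.2 := by
  have h1 : ∑ q ∈ univ.filter (fun q : α × β => P q.1 ∧ Q q.1 q.2), f q.1 q.2
      = ∑ a : α, ∑ b : β, if P a ∧ Q a b then f a b else 0 := by
    rw [Finset.sum_filter, Fintype.sum_prod_type]
  rw [h1]
  simp only [Finset.sum_filter]
  refine Finset.sum_congr rfl fun a _ => ?_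
  by_cases h : P a <;> simp [h]

lemma sum_filter_triple (P : α → Prop) (Q : α → β → Prop) (R : α → β → γ → Prop)
    [DecidablePred P] [∀ a, DecidablePred (Q a)] [∀ a b, DecidablePred (R a b)]
    (f : α → β → γ → M) :
    ∑ a ∈ univ.filter P, ∑ b ∈ univ.filter (Q a), ∑ c ∈ univ.filter (R a b), f a b c
      = ∑ t ∈ univ.filter (fun t : α × β × γ => P t.1 ∧ Q t.1 t.2.1 ∧ R t.1 t.2.1 t.2.2),
          f t.1 t.2.1 t.2.2 := by
  have h1 : ∑ t ∈ univ.filter (fun t : α × β × γ => P t.1 ∧ Q t.1 t.2.1 ∧ R t.1 t.2.1 t.2.2),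
        f t.1 t.2.1 t.2.2
      = ∑ a : α, ∑ b : β, ∑ c : γ, if P a ∧ Q a b ∧ R a b c then f a b c else 0 := by
    rw [Finset.sum_filter, Fintype.sum_prod_type]
    simp only [Fintype.sum_prod_type]
  rw [h1]
  simp only [Finset.sum_filter]
  refine Finset.sum_congr rfl fun a _ => ?_
  by_cases hP : P a
  · simp only [hP, if_true, true_and]
    refine Finset.sum_congr rfl fun b _ => ?_
    by_cases hQ : Q a b <;> simp [hQ]
  · simp [hP]

end helpers

set_option maxHeartbeats 2000000 in
theorem pbin_sq_expansion (n : ℕ) (hn : 2 ≤ n) (p : Fin n → ℝ) (k : ℕ)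
    (hk1 : 1 ≤ k) (hk2 : k ≤ n - 1) :
    (∑ C ∈ Finset.univ.powerset.filter (fun C : Finset (Fin n) => C.card = k),
        ∑ D ∈ Finset.univ.powerset.filter
            (fun D : Finset (Fin n) => D.card = k ∧ D ≠ C),
          (∏ c ∈ C, p c) * (∏ d ∈ D, p d) * (∏ c' ∈ Cᶜ, (1 - p c')) *
            ∏ d' ∈ Dᶜ, (1 - p d')) =
      (∑ w ∈ Finset.range k,
        ∑ I ∈ Finset.univ.powerset.filter (fun I : Finset (Fin n) => I.card = w),
          ∑ J ∈ (Iᶜ).powerset.filter (fun J : Finset (Fin n) => J.card = 2 * k - 2 * w),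
            ((2 * k - 2 * w).choose (k - w) : ℝ) *
              ((∏ i ∈ I, (p i) ^ 2) * (∏ i' ∈ J, p i' * (1 - p i')) *
                ∏ j ∈ (I ∪ J)ᶜ, (1 - p j) ^ 2)) ∧
    (pbin n p k) ^ 2 =
      (∑ C ∈ Finset.univ.powerset.filter (fun C : Finset (Fin n) => C.card = k),
        (∏ i ∈ C, (p i) ^ 2) * ∏ j ∈ Cᶜ, (1 - p j) ^ 2) +
      ∑ C ∈ Finset.univ.powerset.filter (fun C : Finset (Fin n) => C.card = k),
        ∑ D ∈ Finset.univ.powerset.filter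
            (fun D : Finset (Fin n) => D.card = k ∧ D ≠ C),
          (∏ c ∈ C, p c) * (∏ d ∈ D, p d) * (∏ c' ∈ Cᶜ, (1 - p c')) *
            ∏ d' ∈ Dᶜ, (1 - p d') := by
  constructor
  · -- first conjunct
    simp only [Finset.powerset_univ]
    set G : Finset (Fin n) → Finset (Fin n) → ℝ := fun I J =>
      (∏ i ∈ I, (p i) ^ 2) * (∏ i' ∈ J, p i' * (1 - p i')) *
        ∏ j ∈ (I ∪ J)ᶜ, (1 - p j) ^ 2 with hG
    set F : Finset (Fin n) → Finset (Fin n) → ℝ := fun C D =>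
      (∏ c ∈ C, p c) * (∏ d ∈ D, p d) * (∏ c' ∈ Cᶜ, (1 - p c')) *
        ∏ d' ∈ Dᶜ, (1 - p d') with hF
    -- Step 1: replace the binomial coefficient by a sum over S
    have step1 : ∀ w : ℕ, ∀ I : Finset (Fin n),
        (∑ J ∈ (Iᶜ).powerset.filter (fun J : Finset (Fin n) => J.card = 2 * k - 2 * w),
            ((2 * k - 2 * w).choose (k - w) : ℝ) * G I J)
        = ∑ J ∈ univ.filter (fun J : Finset (Fin n) => J ⊆ Iᶜ ∧ J.card = 2 * k - 2 * w),
            ∑ S ∈ univ.filter (fun S : Finset (Fin n) => S ⊆ J ∧ S.card = k - w), G I J := by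
      intro w I
      rw [show (Iᶜ).powerset.filter (fun J : Finset (Fin n) => J.card = 2 * k - 2 * w)
          = univ.filter (fun J : Finset (Fin n) => J ⊆ Iᶜ ∧ J.card = 2 * k - 2 * w) by
        ext J; simp [Finset.mem_powerset]]
      refine Finset.sum_congr rfl fun J hJ => ?_
      simp only [Finset.mem_filter] at hJ
      rw [show univ.filter (fun S : Finset (Fin n) => S ⊆ J ∧ S.card = k - w)
          = Finset.powersetCard (k - w) J by
        ext S; simp [Finset.mem_powersetCard]]
      rw [Finset.sum_const, Finset.card_powersetCard, hJ.2.2, nsmul_eq_mul]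
    change (∑ C ∈ univ.filter (fun C : Finset (Fin n) => C.card = k),
        ∑ D ∈ univ.filter (fun D : Finset (Fin n) => D.card = k ∧ D ≠ C), F C D) =
      ∑ w ∈ Finset.range k, ∑ I ∈ univ.filter (fun I : Finset (Fin n) => I.card = w),
        ∑ J ∈ (Iᶜ).powerset.filter (fun J : Finset (Fin n) => J.card = 2 * k - 2 * w),
          ((2 * k - 2 * w).choose (k - w) : ℝ) * G I J
    simp only [step1]
    -- Step 2: collapse the `w` summation (on the support, `w = I.card`)
    have step2 :
        (∑ w ∈ Finset.range k, ∑ I ∈ univ.filter (fun I : Finset (Fin n) => I.card = w),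
          ∑ J ∈ univ.filter (fun J : Finset (Fin n) => J ⊆ Iᶜ ∧ J.card = 2 * k - 2 * w),
            ∑ S ∈ univ.filter (fun S : Finset (Fin n) => S ⊆ J ∧ S.card = k - w), G I J)
        = ∑ I ∈ univ.filter (fun I : Finset (Fin n) => I.card < k),
            ∑ J ∈ univ.filter (fun J : Finset (Fin n) =>
                J ⊆ Iᶜ ∧ J.card = 2 * k - 2 * I.card),
              ∑ S ∈ univ.filter (fun S : Finset (Fin n) =>
                S ⊆ J ∧ S.card = k - I.card), G I J := by
      rw [← Finset.sum_fiberwise_of_maps_to (g := Finset.card) (t := Finset.range k)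
        (fun I hI => by simp only [Finset.mem_filter] at hI; exact Finset.mem_range.2 hI.2)]
      refine Finset.sum_congr rfl fun w hw => ?_
      rw [Finset.mem_range] at hw
      refine Finset.sum_congr ?_ fun I hI => ?_
      · ext I
        simp only [Finset.mem_filter, Finset.mem_univ, true_and]
        constructor
        · intro h; exact ⟨by omega, h⟩
        · tauto
      · have hc : I.card = w := (Finset.mem_filter.mp hI).2
        rw [← hc]
    rw [step2]
    -- Step 3: flatten both sides into single sums and use the bijection
    rw [show (univ.filter (fun D : Finset (Fin n) => D.card = k)) =
        univ.filter (fun C : Finset (Fin n) => C.card = k) from rfl]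
    rw [sum_filter_pair (fun C : Finset (Fin n) => C.card = k)
      (fun C D => D.card = k ∧ D ≠ C) F]
    rw [sum_filter_triple (fun I : Finset (Fin n) => I.card < k)
      (fun I J => J ⊆ Iᶜ ∧ J.card = 2 * k - 2 * I.card)
      (fun I J S => S ⊆ J ∧ S.card = k - I.card)
      (fun I J _ => G I J)]
    symm
    refine Finset.sum_nbij'
      (i := fun t : Finset (Fin n) × Finset (Fin n) × Finset (Fin n) =>
        (t.1 ∪ t.2.2, t.1 ∪ (t.2.1 \ t.2.2)))
      (j := fun q : Finset (Fin n) × Finset (Fin n) =>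
        (q.1 ∩ q.2, ((q.1 ∪ q.2) \ (q.1 ∩ q.2), q.1 \ q.2)))
      ?_ ?_ ?_ ?_ ?_
    · -- maps to
      rintro ⟨I, J, S⟩ ht
      simp only [Finset.mem_filter, Finset.mem_univ, true_and] at ht ⊢
      obtain ⟨hIk, ⟨hJI, hJcard⟩, hSJ, hScard⟩ := ht
      have hJcompl : ∀ x ∈ J, x ∉ I := fun x hx => by
        simpa using hJI hx
      have hdIS : Disjoint I S :=
        Finset.disjoint_left.2 fun x hxI hxS => hJcompl x (hSJ hxS) hxI
      have hdIJS : Disjoint I (J \ S) :=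
        Finset.disjoint_left.2 fun x hxI hx => hJcompl x (Finset.mem_sdiff.mp hx).1 hxI
      have hJS : (J \ S).card = J.card - S.card := Finset.card_sdiff_of_subset hSJ
      have hCcard : (I ∪ S).card = k := by
        rw [Finset.card_union_of_disjoint hdIS]; omega
      have hDcard : (I ∪ (J \ S)).card = k := by
        rw [Finset.card_union_of_disjoint hdIJS]
        have hSle : S.card ≤ J.card := Finset.card_le_card hSJ
        omega
      refine ⟨hCcard, hDcard, ?_⟩
      intro hEq
      have hS1 : (I ∪ (J \ S)) \ I = J \ S := Finset.union_sdiff_cancel_left hdIJS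
      have hS2 : (I ∪ S) \ I = S := Finset.union_sdiff_cancel_left hdIS
      have hSS : J \ S = S := by rw [← hS1, hEq, hS2]
      have hd : Disjoint (J \ S) S := Finset.sdiff_disjoint
      rw [hSS] at hd
      have hSe : S = ∅ := disjoint_self.mp hd
      rw [hSe] at hScard
      simp [Finset.bot_eq_empty] at hScard
      omega
    · -- maps back
      rintro ⟨C, D⟩ hq
      simp only [Finset.mem_filter, Finset.mem_univ, true_and] at hq ⊢
      obtain ⟨hC, hD, hne⟩ := hq
      have hsub : C ∩ D ⊆ C := Finset.inter_subset_left
      have hile : (C ∩ D).card ≤ k := hC ▸ Finset.card_le_card hsub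
      have hilt : (C ∩ D).card < k := by
        rcases lt_or_eq_of_le hile with h | h
        · exact h
        · exfalso
          have h1 : C ∩ D = C := Finset.eq_of_subset_of_card_le hsub (by omega)
          have h2 : C ⊆ D := by rw [← h1]; exact Finset.inter_subset_right
          exact hne (Finset.eq_of_subset_of_card_le h2 (by omega)).symm
      have hu : (C ∪ D).card + (C ∩ D).card = 2 * k := by
        have := Finset.card_union_add_card_inter C D
        omega
      have hsd : (C ∩ D) ⊆ (C ∪ D) := Finset.inter_subset_union
      have hJcard : ((C ∪ D) \ (C ∩ D)).card = 2 * k - 2 * (C ∩ D).card := by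
        rw [Finset.card_sdiff_of_subset hsd]; omega
      have hScard : (C \ D).card = k - (C ∩ D).card := by
        have := Finset.card_inter_add_card_sdiff C D
        omega
      refine ⟨hilt, ⟨?_, hJcard⟩, ?_, hScard⟩
      · intro x hx
        simp only [Finset.mem_sdiff, Finset.mem_union, Finset.mem_inter] at hx
        simp only [Finset.mem_compl, Finset.mem_inter]
        tauto
      · intro x hx
        simp only [Finset.mem_sdiff] at hx
        simp only [Finset.mem_sdiff, Finset.mem_union, Finset.mem_inter]
        tauto
    · -- left inverse : j (i t) = t
      rintro ⟨I, J, S⟩ ht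
      simp only [Finset.mem_filter, Finset.mem_univ, true_and] at ht
      obtain ⟨hIk, ⟨hJI, hJcard⟩, hSJ, hScard⟩ := ht
      have h1 : ∀ x, x ∈ S → x ∈ J := fun x hx => hSJ hx
      have h2 : ∀ x, x ∈ J → x ∉ I := fun x hx => by simpa using hJI hx
      have e1 : (I ∪ S) ∩ (I ∪ (J \ S)) = I := by
        ext x
        simp only [Finset.mem_inter, Finset.mem_union, Finset.mem_sdiff]
        have := h1 x; have := h2 x; tauto
      have e2 : ((I ∪ S) ∪ (I ∪ (J \ S))) \ ((I ∪ S) ∩ (I ∪ (J \ S))) = J := by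
        ext x
        simp only [Finset.mem_sdiff, Finset.mem_union, Finset.mem_inter]
        have := h1 x; have := h2 x; tauto
      have e3 : (I ∪ S) \ (I ∪ (J \ S)) = S := by
        ext x
        simp only [Finset.mem_sdiff, Finset.mem_union]
        have := h1 x; have := h2 x; tauto
      simp only [Prod.mk.injEq]
      exact ⟨e1, e2, e3⟩
    · -- right inverse : i (j q) = q
      rintro ⟨C, D⟩ hq
      simp only [Prod.mk.injEq]
      constructor
      · ext x
        simp only [Finset.mem_union, Finset.mem_inter, Finset.mem_sdiff]
        tauto
      · ext x
        simp only [Finset.mem_union, Finset.mem_inter, Finset.mem_sdiff]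
        tauto
    · -- values agree : G I J = F (I ∪ S) (I ∪ (J \ S))
      rintro ⟨I, J, S⟩ ht
      simp only [Finset.mem_filter, Finset.mem_univ, true_and] at ht
      obtain ⟨hIk, ⟨hJI, hJcard⟩, hSJ, hScard⟩ := ht
      have h1 : ∀ x, x ∈ S → x ∈ J := fun x hx => hSJ hx
      have h2 : ∀ x, x ∈ J → x ∉ I := fun x hx => by simpa using hJI hx
      have hdIS : Disjoint I S :=
        Finset.disjoint_left.2 fun x hxI hxS => h2 x (h1 x hxS) hxI
      have hdIJS : Disjoint I (J \ S) :=
        Finset.disjoint_left.2 fun x hxI hx => h2 x (Finset.mem_sdiff.mp hx).1 hxI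
      have hCc : (I ∪ S)ᶜ = (I ∪ J)ᶜ ∪ (J \ S) := by
        ext x
        simp only [Finset.mem_compl, Finset.mem_union, Finset.mem_sdiff]
        have := h1 x; have := h2 x; tauto
      have hDc : (I ∪ (J \ S))ᶜ = (I ∪ J)ᶜ ∪ S := by
        ext x
        simp only [Finset.mem_compl, Finset.mem_union, Finset.mem_sdiff]
        have := h1 x; have := h2 x; tauto
      have hd1 : Disjoint ((I ∪ J)ᶜ) (J \ S) :=
        Finset.disjoint_left.2 fun x hx hx2 => by
          simp only [Finset.mem_compl, Finset.mem_union] at hx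
          exact hx (Or.inr (Finset.mem_sdiff.mp hx2).1)
      have hd2 : Disjoint ((I ∪ J)ᶜ) S :=
        Finset.disjoint_left.2 fun x hx hx2 => by
          simp only [Finset.mem_compl, Finset.mem_union] at hx
          exact hx (Or.inr (h1 x hx2))
      simp only [hG, hF]
      rw [Finset.prod_union hdIS, Finset.prod_union hdIJS, hCc, hDc,
        Finset.prod_union hd1, Finset.prod_union hd2,
        ← Finset.prod_sdiff hSJ (f := fun i => p i * (1 - p i)),
        Finset.prod_mul_distrib, Finset.prod_mul_distrib,
        Finset.prod_pow, Finset.prod_pow]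
      ring
  · -- second conjunct
    have hco : (Finset.univ.filter
          (fun A : Finset (Fin n) => (A.card : ℤ) = (k : ℤ)))
        = univ.filter (fun A : Finset (Fin n) => A.card = k) := by
      ext A; simp [Nat.cast_inj]
    simp only [pbin, Finset.powerset_univ, hco]
    rw [sq, Finset.sum_mul_sum, ← Finset.sum_add_distrib]
    refine Finset.sum_congr rfl fun C hC => ?_
    have hset : univ.filter (fun D : Finset (Fin n) => D.card = k ∧ D ≠ C)
        = (univ.filter (fun D : Finset (Fin n) => D.card = k)).erase C := by
      ext D
      simp only [Finset.mem_filter, Finset.mem_erase, Finset.mem_univ, true_and]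
      tauto
    rw [hset, ← Finset.add_sum_erase _ _ hC]
    congr 1
    · rw [Finset.prod_pow, Finset.prod_pow]; ring
    · exact Finset.sum_congr rfl fun D _ => by ring
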